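/- Fix n, and let W = ∪_{j=a}^{b} R_j be an interval of rows of the diamond D_n where a ≤ b and a is odd. Let H be a set of odd vertices of W such that each column contains at most one vertex of H. Suppose that either (i) b is odd, or (ii) b is even and for each integer t, the top t odd rows of W contain at most t vertices of H. Then there exists a matching of W that matches all even vertices of W but leaves every vertex of H unmatched. -/

import Mathlib

/-- The nearest-neighbour grid graph on `ℤ²`. -/
def gridGraph : SimpleGraph (ℤ × ℤ) where
  Adj u v := |u.1 - v.1| + |u.2 - v.2| = 1
  symm := by
    constructor
    intro u v h
    simpa [abs_sub_comm] using h
  loopless := by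
    constructor
    intro u h
    simp at h

/-- The diamond `D_n = {u ∈ ℤ² : ‖u‖₁ < 2n}`. -/
def diamond (n : ℕ) : Set (ℤ × ℤ) :=
  {u | |u.1| + |u.2| < 2 * n}

namespace RowAux

lemma mem_diamond {n : ℕ} {u : ℤ × ℤ} :
    u ∈ diamond n ↔ (u.1.natAbs : ℤ) + u.2.natAbs < 2 * n := by
  simp only [diamond, Set.mem_setOf_eq, Int.abs_eq_natAbs]

lemma diamond_finite (n : ℕ) : (diamond n).Finite := by
  apply Set.Finite.subset (Set.finite_Icc ((-(2*(n:ℤ)), -(2*(n:ℤ)))) (((2*(n:ℤ)), (2*(n:ℤ)))))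
  intro u hu
  rw [mem_diamond] at hu
  simp only [Set.mem_Icc, Prod.le_def]
  omega

/-- "down-left" condition: the even vertex sits on the horizontal segment of
the alternating chain exiting the hole `h` at exit row `ℓ h`. -/
def DLc (H : Set (ℤ × ℤ)) (ℓ : ℤ × ℤ → ℤ) (u : ℤ × ℤ) : Prop :=
  ∃ h ∈ H, u.2 - u.1 = ℓ h + 1 ∧ u.1 + u.2 ≤ h.1 + h.2 - 1

/-- "up-right" condition: the even vertex sits on the vertical segment of the
chain of the hole `h` (same column pair, strictly above the hole, at most the
exit row). -/
def URc (H : Set (ℤ × ℤ)) (ℓ : ℤ × ℤ → ℤ) (u : ℤ × ℤ) : Prop :=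
  ∃ h ∈ H, u.1 + u.2 = h.1 + h.2 - 1 ∧ h.2 - h.1 < u.2 - u.1 ∧ u.2 - u.1 ≤ ℓ h

open Classical in
/-- The partner of an even vertex. -/
noncomputable def exf (H : Set (ℤ × ℤ)) (ℓ : ℤ × ℤ → ℤ) (u : ℤ × ℤ) : ℤ × ℤ :=
  if DLc H ℓ u then (u.1, u.2 - 1)
  else if URc H ℓ u then (u.1, u.2 + 1)
  else (u.1 + 1, u.2)

lemma exf_cases (H : Set (ℤ × ℤ)) (ℓ : ℤ × ℤ → ℤ) (u : ℤ × ℤ) :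
    (DLc H ℓ u ∧ exf H ℓ u = (u.1, u.2 - 1)) ∨
    (¬ DLc H ℓ u ∧ URc H ℓ u ∧ exf H ℓ u = (u.1, u.2 + 1)) ∨
    (¬ DLc H ℓ u ∧ ¬ URc H ℓ u ∧ exf H ℓ u = (u.1 + 1, u.2)) := by
  classical
  by_cases h1 : DLc H ℓ u
  · exact Or.inl ⟨h1, by rw [exf, if_pos h1]⟩
  by_cases h2 : URc H ℓ u
  · exact Or.inr (Or.inl ⟨h1, h2, by rw [exf, if_neg h1, if_pos h2]⟩)
  · exact Or.inr (Or.inr ⟨h1, h2, by rw [exf, if_neg h1, if_neg h2]⟩)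

theorem construction
    (n : ℕ) (a b B : ℤ) (ha : Odd a)
    (W : Set (ℤ × ℤ)) (hW : W = {u ∈ diamond n | a ≤ u.2 - u.1 ∧ u.2 - u.1 ≤ b})
    (H : Set (ℤ × ℤ)) (hHW : H ⊆ W)
    (hcol : ∀ u ∈ H, ∀ v ∈ H, u.1 + u.2 = v.1 + v.2 → u = v)
    (hB : B = min b (2 * (n : ℤ) - 1))
    (ℓ : ℤ × ℤ → ℤ)
    (hodd : ∀ h ∈ H, ℓ h ≤ B → ℓ h % 2 = 1)
    (hlow : ∀ h ∈ H, h.2 - h.1 ≤ ℓ h)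
    (hhigh : ∀ h ∈ H, ℓ h ≤ B + 1)
    (htop : ∀ h ∈ H, ℓ h = B + 1 → B % 2 = 1)
    (hinj : ∀ h ∈ H, ∀ h' ∈ H, h ≠ h' → ℓ h ≤ B → ℓ h' ≤ B → ℓ h ≠ ℓ h')
    (hnc : ∀ h ∈ H, ∀ h' ∈ H, h.1 + h.2 < h'.1 + h'.2 →
      h.2 - h.1 ≤ ℓ h' → ℓ h' < ℓ h → False)
    (hHodd : ∀ u ∈ H, Odd (u.1 + u.2)) :
    ∃ M : gridGraph.Subgraph, M.verts ⊆ W ∧ M.IsMatching ∧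
      (∀ u ∈ W, Even (u.1 + u.2) → u ∈ M.verts) ∧
      (∀ u ∈ H, u ∉ M.verts) := by
  classical
  have hWmem : ∀ x y : ℤ, ((x, y) ∈ W) ↔
      ((x.natAbs : ℤ) + y.natAbs < 2 * n ∧ a ≤ y - x ∧ y - x ≤ b) := by
    intro x y
    rw [hW]
    constructor
    · rintro ⟨h1, h2, h3⟩
      rw [mem_diamond] at h1
      exact ⟨h1, h2, h3⟩
    · rintro ⟨h1, h2, h3⟩
      exact ⟨mem_diamond.mpr h1, h2, h3⟩
  have hWfact : ∀ u : ℤ × ℤ, u ∈ W →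
      ((u.1.natAbs : ℤ) + u.2.natAbs < 2 * n ∧ a ≤ u.2 - u.1 ∧ u.2 - u.1 ≤ b) := by
    intro u hu
    rw [hW] at hu
    obtain ⟨h1, h2, h3⟩ := hu
    rw [mem_diamond] at h1
    exact ⟨h1, h2, h3⟩
  have ha' : a % 2 = 1 := Int.odd_iff.mp ha
  have hadjDL : ∀ w : ℤ × ℤ, gridGraph.Adj w (w.1, w.2 - 1) := by
    intro w
    show |w.1 - w.1| + |w.2 - (w.2 - 1)| = 1
    rw [sub_self, show w.2 - (w.2 - 1) = 1 by ring]
    simp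
  have hadjUR : ∀ w : ℤ × ℤ, gridGraph.Adj w (w.1, w.2 + 1) := by
    intro w
    show |w.1 - w.1| + |w.2 - (w.2 + 1)| = 1
    rw [sub_self, show w.2 - (w.2 + 1) = -1 by ring]
    simp
  have hadjDR : ∀ w : ℤ × ℤ, gridGraph.Adj w (w.1 + 1, w.2) := by
    intro w
    show |w.1 - (w.1 + 1)| + |w.2 - w.2| = 1
    rw [sub_self, show w.1 - (w.1 + 1) = -1 by ring]
    simp
  -- Key lemma 1: images are good
  have K1 : ∀ u, u ∈ W → (u.1 + u.2) % 2 = 0 →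
      (exf H ℓ u ∈ W ∧ ((exf H ℓ u).1 + (exf H ℓ u).2) % 2 = 1 ∧ exf H ℓ u ∉ H ∧
        gridGraph.Adj u (exf H ℓ u)) := by
    intro u huW hue
    obtain ⟨hd, hra, hrb⟩ := hWfact u huW
    have hjB : u.2 - u.1 ≤ B := by omega
    rcases exf_cases H ℓ u with ⟨hc, he⟩ | ⟨hc1, hc2, he⟩ | ⟨hc1, hc2, he⟩
    · -- DL : partner (u.1, u.2 - 1)
      rw [he]
      obtain ⟨p, hp, e1, e2⟩ := hc
      refine ⟨(hWmem u.1 (u.2 - 1)).mpr ⟨by omega, by omega, by omega⟩, ?_, ?_, hadjDL u⟩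
      · show (u.1 + (u.2 - 1)) % 2 = 1
        omega
      · intro hmem
        have l1 : u.2 - 1 - u.1 ≤ ℓ (u.1, u.2 - 1) := hlow _ hmem
        have l2 : u.1 + (u.2 - 1) < p.1 + p.2 → u.2 - 1 - u.1 ≤ ℓ p →
            ℓ p < ℓ (u.1, u.2 - 1) → False := hnc _ hmem p hp
        have l3 : ¬ (ℓ p < ℓ (u.1, u.2 - 1)) := fun h => l2 (by omega) (by omega) h
        have hne : p ≠ (u.1, u.2 - 1) := by
          intro e
          have e3 : p.1 = u.1 := by rw [e]
          have e4 : p.2 = u.2 - 1 := by rw [e]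
          omega
        exact (hinj p hp _ hmem hne (by omega) (by omega)) (by omega)
    · -- UR : partner (u.1, u.2 + 1)
      rw [he]
      obtain ⟨p, hp, e1, e2, e3⟩ := hc2
      have hup : u.2 - u.1 + 1 ≤ B := by
        by_cases hcb : ℓ p ≤ B
        · have := hodd p hp hcb; omega
        · have h1 := hhigh p hp
          have h2 := htop p hp (by omega)
          omega
      refine ⟨(hWmem u.1 (u.2 + 1)).mpr ⟨by omega, by omega, by omega⟩, ?_, ?_, hadjUR u⟩
      · show (u.1 + (u.2 + 1)) % 2 = 1
        omega
      · intro hmem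
        have hcoleq : (u.1, u.2 + 1) = p :=
          hcol _ hmem p hp (show u.1 + (u.2 + 1) = p.1 + p.2 by omega)
        have hp1 : p.1 = u.1 := by rw [← hcoleq]
        have hp2 : p.2 = u.2 + 1 := by rw [← hcoleq]
        omega
    · -- DR : partner (u.1 + 1, u.2)
      rw [he]
      refine ⟨(hWmem (u.1 + 1) u.2).mpr ⟨by omega, by omega, by omega⟩, ?_, ?_, hadjDR u⟩
      · show ((u.1 + 1) + u.2) % 2 = 1
        omega
      · intro hmem
        have l1 : u.2 - (u.1 + 1) ≤ ℓ (u.1 + 1, u.2) := hlow _ hmem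
        by_cases hcb : u.2 - u.1 ≤ ℓ (u.1 + 1, u.2)
        · exact hc2 ⟨(u.1 + 1, u.2), hmem,
            show u.1 + u.2 = (u.1 + 1) + u.2 - 1 by ring,
            show u.2 - (u.1 + 1) < u.2 - u.1 by omega, hcb⟩
        · exact hc1 ⟨(u.1 + 1, u.2), hmem,
            show u.2 - u.1 = ℓ (u.1 + 1, u.2) + 1 by omega,
            show u.1 + u.2 ≤ (u.1 + 1) + u.2 - 1 by omega⟩
  -- Key lemma 2: injectivity on even vertices of W
  have K2 : ∀ u, u ∈ W → (u.1 + u.2) % 2 = 0 → ∀ v, v ∈ W → (v.1 + v.2) % 2 = 0 →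
      exf H ℓ u = exf H ℓ v → u = v := by
    intro u huW hue v hvW hve hEq
    obtain ⟨hdu, hrau, hrbu⟩ := hWfact u huW
    obtain ⟨hdv, hrav, hrbv⟩ := hWfact v hvW
    have hjBu : u.2 - u.1 ≤ B := by omega
    have hjBv : v.2 - v.1 ≤ B := by omega
    have hPQ : ∀ x1 x2 y1 y2 : ℤ, ((x1, x2) : ℤ × ℤ) = (y1, y2) → x1 = y1 ∧ x2 = y2 := by
      intro _ _ _ _ h
      exact ⟨congrArg Prod.fst h, congrArg Prod.snd h⟩
    rcases exf_cases H ℓ u with ⟨hu1, heu⟩ | ⟨hu1, hu2, heu⟩ | ⟨hu1, hu2, heu⟩ <;>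
      rcases exf_cases H ℓ v with ⟨hv1, hev⟩ | ⟨hv1, hv2, hev⟩ | ⟨hv1, hv2, hev⟩ <;>
        rw [heu, hev] at hEq <;>
          obtain ⟨hx, hy⟩ := hPQ _ _ _ _ hEq
    -- (DL, DL)
    · exact Prod.ext_iff.mpr ⟨by omega, by omega⟩
    -- (DL, UR)
    · obtain ⟨p, hp, ep1, ep2⟩ := hu1
      obtain ⟨q, hq, eq1, eq2, eq3⟩ := hv2
      exfalso
      by_cases c1 : u.2 - u.1 ≤ ℓ q
      · exact hnc q hq p hp (by omega) (by omega) (by omega)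
      · by_cases c2 : ℓ q = u.2 - u.1 - 1
        · refine (hinj q hq p hp ?_ (by omega) (by omega)) (by omega)
          intro e
          rw [e] at eq1
          omega
        · have : ℓ q % 2 = 1 := hodd q hq (by omega)
          omega
    -- (DL, DR)
    · obtain ⟨p, hp, ep1, ep2⟩ := hu1
      exact absurd ⟨p, hp, by omega, by omega⟩ hv1
    -- (UR, DL)
    · obtain ⟨p, hp, ep1, ep2, ep3⟩ := hu2
      obtain ⟨q, hq, eq1, eq2⟩ := hv1
      exfalso
      by_cases c1 : u.2 - u.1 + 2 ≤ ℓ p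
      · exact hnc p hp q hq (by omega) (by omega) (by omega)
      · by_cases c2 : ℓ p = u.2 - u.1 + 1
        · refine (hinj p hp q hq ?_ (by omega) (by omega)) (by omega)
          intro e
          rw [e] at ep1
          omega
        · have : ℓ p % 2 = 1 := hodd p hp (by omega)
          omega
    -- (UR, UR)
    · exact Prod.ext_iff.mpr ⟨by omega, by omega⟩
    -- (UR, DR)
    · obtain ⟨p, hp, ep1, ep2, ep3⟩ := hu2
      exfalso
      by_cases c1 : v.2 - v.1 ≤ ℓ p
      · exact hv2 ⟨p, hp, by omega, by omega, c1⟩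
      · by_cases c2 : ℓ p = u.2 - u.1 + 1
        · exact hv1 ⟨p, hp, by omega, by omega⟩
        · have : ℓ p % 2 = 1 := hodd p hp (by omega)
          omega
    -- (DR, DL)
    · obtain ⟨q, hq, eq1, eq2⟩ := hv1
      exact absurd ⟨q, hq, by omega, by omega⟩ hu1
    -- (DR, UR)
    · obtain ⟨q, hq, eq1, eq2, eq3⟩ := hv2
      exfalso
      by_cases c1 : u.2 - u.1 ≤ ℓ q
      · exact hu2 ⟨q, hq, by omega, by omega, c1⟩
      · by_cases c2 : ℓ q = u.2 - u.1 - 1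
        · exact hu1 ⟨q, hq, by omega, by omega⟩
        · have : ℓ q % 2 = 1 := hodd q hq (by omega)
          omega
    -- (DR, DR)
    · exact Prod.ext_iff.mpr ⟨by omega, by omega⟩
  -- assemble the matching
  set Ev : Set (ℤ × ℤ) := {u | u ∈ W ∧ (u.1 + u.2) % 2 = 0} with hEvdef
  have hEvW : ∀ u, u ∈ Ev → u ∈ W ∧ (u.1 + u.2) % 2 = 0 := fun u h => h
  refine ⟨⟨Ev ∪ (exf H ℓ) '' Ev,
    fun x y => (x ∈ Ev ∧ y = exf H ℓ x) ∨ (y ∈ Ev ∧ x = exf H ℓ y), ?_, ?_, ?_⟩, ?_, ?_, ?_, ?_⟩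
  · -- adj_sub
    rintro x y (⟨hx, rfl⟩ | ⟨hy, rfl⟩)
    · exact (K1 x (hEvW x hx).1 (hEvW x hx).2).2.2.2
    · exact ((K1 y (hEvW y hy).1 (hEvW y hy).2).2.2.2).symm
  · -- edge_vert
    rintro x y (⟨hx, rfl⟩ | ⟨hy, rfl⟩)
    · exact Or.inl hx
    · exact Or.inr ⟨y, hy, rfl⟩
  · -- symm
    constructor
    intro x y h
    rcases h with h | h
    · exact Or.inr h
    · exact Or.inl h
  · -- verts ⊆ W
    rintro x (hx | ⟨e, he, rfl⟩)
    · exact (hEvW x hx).1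
    · exact (K1 e (hEvW e he).1 (hEvW e he).2).1
  · -- IsMatching
    intro v hv
    by_cases hvE : v ∈ Ev
    · refine ⟨exf H ℓ v, Or.inl ⟨hvE, rfl⟩, ?_⟩
      rintro y (⟨-, rfl⟩ | ⟨hyE, hvfy⟩)
      · rfl
      · exfalso
        have h1 := (K1 y (hEvW y hyE).1 (hEvW y hyE).2).2.1
        have h2 := (hEvW v hvE).2
        rw [hvfy] at h2
        omega
    · rcases hv with hv | ⟨e, he, rfl⟩
      · exact absurd hv hvE
      · refine ⟨e, Or.inr ⟨he, rfl⟩, ?_⟩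
        rintro y (⟨hyE, -⟩ | ⟨hyE, hfe⟩)
        · exact absurd hyE hvE
        · exact K2 y (hEvW y hyE).1 (hEvW y hyE).2 e (hEvW e he).1 (hEvW e he).2 hfe.symm
  · -- all even vertices covered
    intro u hu he
    exact Or.inl ⟨hu, Int.even_iff.mp he⟩
  · -- H avoided
    intro u huH hmem
    rcases hmem with hm | ⟨e, he, hfe⟩
    · have h1 := (hEvW u hm).2
      have h2 := Int.odd_iff.mp (hHodd u huH)
      omega
    · have h3 := (K1 e (hEvW e he).1 (hEvW e he).2).2.2.1
      rw [hfe] at h3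
      exact h3 huH

end RowAux

/-- Let `W = ⋃_{j=a}^{b} R_j` be an interval of rows of the
diamond `D_n` (row index of `u` being `j = u.2 - u.1`), with `a ≤ b` and `a`
odd.  Let `H` be a set of odd vertices of `W` with at most one vertex of `H`
in each column (column index `i = u.1 + u.2`).  Suppose either (i) `b` is odd,
or (ii) `b` is even and for every `t`, the top `t` odd rows of `W` (rows with
index `> b - 2t`) contain at most `t` vertices of `H`.  Then there is a
matching of `W` matching all even vertices of `W` but leaving `H`
unmatched. -/
theorem rowInterval_matching_all_even_avoiding
    (n : ℕ) (hn : 0 < n) (a b : ℤ) (ha : Odd a) (hab : a ≤ b)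
    (W : Set (ℤ × ℤ)) (hW : W = {u ∈ diamond n | a ≤ u.2 - u.1 ∧ u.2 - u.1 ≤ b})
    (H : Set (ℤ × ℤ)) (hHW : H ⊆ W)
    (hHodd : ∀ u ∈ H, Odd (u.1 + u.2))
    (hcol : ∀ u ∈ H, ∀ v ∈ H, u.1 + u.2 = v.1 + v.2 → u = v)
    (hcase : Odd b ∨ (Even b ∧ ∀ t : ℕ,
      (H ∩ {u | b - 2 * (t : ℤ) < u.2 - u.1}).ncard ≤ t)) :
    ∃ M : gridGraph.Subgraph, M.verts ⊆ W ∧ M.IsMatching ∧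
      (∀ u ∈ W, Even (u.1 + u.2) → u ∈ M.verts) ∧
      (∀ u ∈ H, u ∉ M.verts) := by
  classical
  have h2n1 : (2 * (n : ℤ) - 1) % 2 = 1 := by omega
  set B : ℤ := min b (2 * (n : ℤ) - 1) with hB
  have hHfacts : ∀ h ∈ H, (h.1.natAbs : ℤ) + h.2.natAbs < 2 * n ∧ a ≤ h.2 - h.1 ∧ h.2 - h.1 ≤ b := by
    intro h hh
    have h1 := hHW hh
    rw [hW] at h1
    obtain ⟨h2, h3, h4⟩ := h1
    rw [RowAux.mem_diamond] at h2
    exact ⟨h2, h3, h4⟩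
  have hHodd' : ∀ h ∈ H, (h.1 + h.2) % 2 = 1 := fun h hh => Int.odd_iff.mp (hHodd h hh)
  by_cases hOB : B % 2 = 1
  · -- effective top row is odd: all chains go straight up, exit value B + 1
    refine RowAux.construction n a b B ha W hW H hHW hcol hB (fun _ => B + 1)
      ?_ ?_ ?_ ?_ ?_ ?_ hHodd
    · intro h _ hle
      have hle' : B + 1 ≤ B := hle
      exact absurd hle' (by omega)
    · intro h hh
      have h1 := hHfacts h hh
      show h.2 - h.1 ≤ B + 1
      omega
    · intro h _
      show B + 1 ≤ B + 1
      omega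
    · intro h _ _
      exact hOB
    · intro h _ h' _ _ hle _
      have hle' : B + 1 ≤ B := hle
      exact absurd hle' (by omega)
    · intro h _ h' _ _ _ hlt
      have hlt' : B + 1 < B + 1 := hlt
      omega
  · -- B is even, so B = b (≤ 2n - 2) and case (ii) applies
    have hBeven : B % 2 = 0 := by omega
    have hbB : B = b := by omega
    have hcond : ∀ t : ℕ, (H ∩ {u | B - 2 * (t : ℤ) < u.2 - u.1}).ncard ≤ t := by
      rcases hcase with hodd' | ⟨_, hc⟩
      · exfalso
        have := Int.odd_iff.mp hodd'
        omega
      · intro t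
        rw [hbB]
        exact hc t
    have hWfin : W.Finite := by
      rw [hW]
      exact (RowAux.diamond_finite n).subset (Set.sep_subset _ _)
    have hfin : H.Finite := hWfin.subset hHW
    set Hs : Finset (ℤ × ℤ) := hfin.toFinset with hHsdef
    have hmemHs : ∀ x, x ∈ Hs ↔ x ∈ H := fun x => hfin.mem_toFinset
    set ord : ℤ × ℤ → ℤ × ℤ → Prop := fun x y =>
      (y.2 - y.1 < x.2 - x.1) ∨ (x.2 - x.1 = y.2 - y.1 ∧ x.1 + x.2 < y.1 + y.2) with hord
    set rank : ℤ × ℤ → ℕ := fun y => (Hs.filter (fun x => ord x y)).card with hrank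
    have hordtrans : ∀ x y z, ord x y → ord y z → ord x z := by
      intro x y z h1 h2
      simp only [hord] at h1 h2 ⊢
      omega
    have hordirr : ∀ x, ¬ ord x x := by
      intro x
      simp only [hord]
      omega
    have hordtot : ∀ x ∈ Hs, ∀ y ∈ Hs, x ≠ y → ord x y ∨ ord y x := by
      intro x hx y hy hxy
      have hii : x.1 + x.2 ≠ y.1 + y.2 :=
        fun e => hxy (hcol x ((hmemHs x).1 hx) y ((hmemHs y).1 hy) e)
      simp only [hord]
      omega
    have hrank_lt : ∀ x ∈ Hs, ∀ y ∈ Hs, ord x y → rank x < rank y := by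
      intro x hx y hy hxy
      have hsub : Hs.filter (fun z => ord z x) ⊆ Hs.filter (fun z => ord z y) := by
        intro z hz
        rw [Finset.mem_filter] at hz ⊢
        exact ⟨hz.1, hordtrans z x y hz.2 hxy⟩
      have hxin : x ∈ Hs.filter (fun z => ord z y) := Finset.mem_filter.mpr ⟨hx, hxy⟩
      have hxout : x ∉ Hs.filter (fun z => ord z x) := by
        rw [Finset.mem_filter]
        exact fun hc => hordirr x hc.2
      simp only [hrank]
      exact Finset.card_lt_card ((Finset.ssubset_iff_of_subset hsub).mpr ⟨x, hxin, hxout⟩)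
    have hrowB : ∀ h ∈ H, h.2 - h.1 ≤ B - 1 := by
      intro h hh
      have h1 := hHfacts h hh
      have h2 := hHodd' h hh
      omega
    have hrank_low : ∀ h ∈ Hs, (h.2 - h.1) ≤ B - 1 - 2 * (rank h : ℤ) := by
      intro h hh
      have hhH := (hmemHs h).1 hh
      have hj := hrowB h hhH
      have hpar := hHodd' h hhH
      set t : ℕ := ((B + 1 - (h.2 - h.1)) / 2).toNat with htdef
      have h2t : 2 * (t : ℤ) = B + 1 - (h.2 - h.1) := by
        have h3 := hHfacts h hhH
        omega
      have hnotmem : h ∉ Hs.filter (fun z => ord z h) := by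
        rw [Finset.mem_filter]
        exact fun hc => hordirr h hc.2
      have hsub : ↑(insert h (Hs.filter (fun z => ord z h))) ⊆
          H ∩ {u | B - 2 * (t : ℤ) < u.2 - u.1} := by
        intro z hz
        simp only [Finset.coe_insert, Set.mem_insert_iff, Finset.mem_coe,
          Finset.mem_filter] at hz
        constructor
        · rcases hz with rfl | ⟨hz1, _⟩
          · exact hhH
          · exact (hmemHs z).1 hz1
        · simp only [Set.mem_setOf_eq]
          rcases hz with rfl | ⟨_, hz2⟩
          · omega
          · simp only [hord] at hz2
            omega
      have hcard : (insert h (Hs.filter (fun z => ord z h))).card ≤ t := by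
        calc (insert h (Hs.filter (fun z => ord z h))).card
            = ((insert h (Hs.filter (fun z => ord z h)) : Finset (ℤ × ℤ)) :
                Set (ℤ × ℤ)).ncard := (Set.ncard_coe_finset _).symm
          _ ≤ (H ∩ {u | B - 2 * (t : ℤ) < u.2 - u.1}).ncard :=
              Set.ncard_le_ncard hsub (hfin.inter_of_left _)
          _ ≤ t := hcond t
      rw [Finset.card_insert_of_notMem hnotmem] at hcard
      simp only [hrank]
      omega
    set Φ : (ℤ × ℤ → ℤ) → ℤ := fun g => ∑ x ∈ Hs, (x.1 + x.2) * g x with hPhi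
    set Valid : (ℤ × ℤ → ℤ) → Prop := fun g =>
      (∀ h ∈ Hs, g h % 2 = 1 ∧ h.2 - h.1 ≤ g h ∧ g h ≤ B - 1) ∧
      (∀ h ∈ Hs, ∀ h' ∈ Hs, h ≠ h' → g h ≠ g h') with hValid
    have hValid0 : Valid (fun h => B - 1 - 2 * (rank h : ℤ)) := by
      simp only [hValid]
      constructor
      · intro h hh
        exact ⟨by omega, hrank_low h hh, by omega⟩
      · intro h hh h' hh' hne hcontra
        have heq : rank h = rank h' := by omega
        rcases hordtot h hh h' hh' hne with ho | ho
        · exact absurd heq (Nat.ne_of_lt (hrank_lt h hh h' hh' ho))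
        · exact absurd heq.symm (Nat.ne_of_lt (hrank_lt h' hh' h hh ho))
    have hbdd : ∀ g, Valid g → Φ g ≤ (Hs.card : ℤ) * (4 * n * n) := by
      intro g hg
      simp only [hValid] at hg
      simp only [hPhi]
      calc ∑ x ∈ Hs, (x.1 + x.2) * g x ≤ ∑ _x ∈ Hs, (4 * (n : ℤ) * n) := by
            apply Finset.sum_le_sum
            intro x hx
            have hxH := (hmemHs x).1 hx
            have h1 := hHfacts x hxH
            have h2 := hg.1 x hx
            have hi1 : -(2 * (n : ℤ)) ≤ x.1 + x.2 := by omega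
            have hi2 : x.1 + x.2 ≤ 2 * (n : ℤ) := by omega
            have hg1 : -(2 * (n : ℤ)) ≤ g x := by omega
            have hg2 : g x ≤ 2 * (n : ℤ) := by omega
            nlinarith [mul_nonneg (by linarith : (0:ℤ) ≤ 2 * (n:ℤ) - (x.1 + x.2))
                (by linarith : (0:ℤ) ≤ 2 * (n:ℤ) + g x),
              mul_nonneg (by linarith : (0:ℤ) ≤ 2 * (n:ℤ) + (x.1 + x.2))
                (by linarith : (0:ℤ) ≤ 2 * (n:ℤ) - g x)]
        _ = (Hs.card : ℤ) * (4 * n * n) := by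
            rw [Finset.sum_const, nsmul_eq_mul]
    obtain ⟨lub, ⟨g, hgV, hgPhi⟩, hlub⟩ :=
      Int.exists_greatest_of_bdd
        (P := fun z => ∃ g, Valid g ∧ Φ g = z)
        ⟨(Hs.card : ℤ) * (4 * n * n), fun z hz => by
          obtain ⟨g, h1, h2⟩ := hz
          exact h2 ▸ hbdd g h1⟩
        ⟨Φ (fun h => B - 1 - 2 * (rank h : ℤ)), _, hValid0, rfl⟩
    simp only [hValid] at hgV
    have hswap : ∀ p q : ℤ × ℤ, p ∈ Hs → q ∈ Hs → p ≠ q →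
        Φ (fun x => if x = p then g q else if x = q then g p else g x)
          = Φ g + ((q.1 + q.2) - (p.1 + p.2)) * (g p - g q) := by
      intro p q hp hq hpq
      have hqe : q ∈ Hs.erase p := Finset.mem_erase.mpr ⟨Ne.symm hpq, hq⟩
      have e1 : ∀ F : ℤ × ℤ → ℤ,
          ∑ x ∈ Hs, F x = ∑ x ∈ (Hs.erase p).erase q, F x + F q + F p := by
        intro F
        rw [Finset.sum_erase_add _ _ hqe, Finset.sum_erase_add _ _ hp]
      simp only [hPhi]
      rw [e1 (fun x => (x.1 + x.2) * (if x = p then g q else if x = q then g p else g x)),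
        e1 (fun x => (x.1 + x.2) * g x)]
      have e2 : ∑ x ∈ (Hs.erase p).erase q,
            (x.1 + x.2) * (if x = p then g q else if x = q then g p else g x)
          = ∑ x ∈ (Hs.erase p).erase q, (x.1 + x.2) * g x := by
        refine Finset.sum_congr rfl fun x hx => ?_
        have hx1 : x ≠ q := (Finset.mem_erase.mp hx).1
        have hx2 : x ≠ p := (Finset.mem_erase.mp (Finset.mem_erase.mp hx).2).1
        rw [if_neg hx2, if_neg hx1]
      rw [e2, if_neg (Ne.symm hpq), if_pos rfl, if_pos rfl]
      ring
    have hnc : ∀ p ∈ H, ∀ q ∈ H, p.1 + p.2 < q.1 + q.2 →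
        p.2 - p.1 ≤ g q → g q < g p → False := by
      intro p hp q hq hilt hjle hglt
      have hpHs : p ∈ Hs := (hmemHs p).2 hp
      have hqHs : q ∈ Hs := (hmemHs q).2 hq
      have hpq : p ≠ q := by
        intro e
        rw [e] at hilt
        omega
      set g' : ℤ × ℤ → ℤ := fun x => if x = p then g q else if x = q then g p else g x with hg'
      have hV' : Valid g' := by
        simp only [hValid, hg']
        constructor
        · intro x hx
          by_cases e1 : x = p
          · subst e1
            rw [if_pos rfl]
            exact ⟨(hgV.1 q hqHs).1, hjle, (hgV.1 q hqHs).2.2⟩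
          · by_cases e2 : x = q
            · subst e2
              rw [if_neg e1, if_pos rfl]
              refine ⟨(hgV.1 p hpHs).1, ?_, (hgV.1 p hpHs).2.2⟩
              have := (hgV.1 x hx).2.1
              omega
            · rw [if_neg e1, if_neg e2]
              exact hgV.1 x hx
        · intro x hx y hy hxy
          by_cases e1 : x = p <;> by_cases e2 : y = p
          · exact absurd (e1.trans e2.symm) hxy
          · subst e1
            rw [if_pos rfl, if_neg e2]
            by_cases e3 : y = q
            · subst e3
              rw [if_pos rfl]
              omega
            · rw [if_neg e3]
              exact hgV.2 q hqHs y hy (fun e => e3 e.symm)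
          · subst e2
            rw [if_neg e1, if_pos rfl]
            by_cases e3 : x = q
            · subst e3
              rw [if_pos rfl]
              omega
            · rw [if_neg e3]
              exact hgV.2 x hx q hqHs e3
          · rw [if_neg e1, if_neg e2]
            by_cases e3 : x = q <;> by_cases e4 : y = q
            · exact absurd (e3.trans e4.symm) hxy
            · subst e3
              rw [if_pos rfl, if_neg e4]
              exact hgV.2 p hpHs y hy (fun e => e2 e.symm)
            · subst e4
              rw [if_neg e3, if_pos rfl]
              exact hgV.2 x hx p hpHs e1
            · rw [if_neg e3, if_neg e4]
              exact hgV.2 x hx y hy hxy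
      have hgt : Φ g' > Φ g := by
        have heq : Φ g' = Φ g + ((q.1 + q.2) - (p.1 + p.2)) * (g p - g q) := by
          rw [hg']
          exact hswap p q hpHs hqHs hpq
        have hpos : 0 < ((q.1 + q.2) - (p.1 + p.2)) * (g p - g q) :=
          mul_pos (by omega) (by omega)
        linarith
      have hle := hlub (Φ g') ⟨g', hV', rfl⟩
      rw [← hgPhi] at hle
      linarith
    refine RowAux.construction n a b B ha W hW H hHW hcol hB g ?_ ?_ ?_ ?_ ?_ hnc hHodd
    · intro h hh _
      exact (hgV.1 h ((hmemHs h).2 hh)).1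
    · intro h hh
      exact (hgV.1 h ((hmemHs h).2 hh)).2.1
    · intro h hh
      have := (hgV.1 h ((hmemHs h).2 hh)).2.2
      omega
    · intro h hh he
      have := (hgV.1 h ((hmemHs h).2 hh)).2.2
      omega
    · intro h hh h' hh' hne _ _
      exact hgV.2 h ((hmemHs h).2 hh) h' ((hmemHs h').2 hh') hne
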